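/- Let G be a finite simple graph, let Ĝ be the double subdivision of G, and let k ∈ ℕ. Then G has a vertex cover of size at most k if and only if Ĝ has a vertex cover of size at most k + |E(G)|. -/

import Mathlib

/-- The double subdivision `Ĝ` of a finite simple graph `G`: every edge `{v,u}` of `G`
is subdivided twice, introducing the new vertices `x_{v,u} = Sum.inr (v, u)` and
`x_{u,v} = Sum.inr (u, v)`, and the edges `{v, x_{v,u}}`, `{u, x_{u,v}}` and
`{x_{v,u}, x_{u,v}}`.  (Pairs `(v, u)` with `v` not adjacent to `u` give isolated
vertices.) -/
def doubleSubdivision {V : Type*} (G : SimpleGraph V) : SimpleGraph (V ⊕ V × V) :=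
  SimpleGraph.fromRel fun a b =>
    (∃ v u, G.Adj v u ∧ a = Sum.inl v ∧ b = Sum.inr (v, u)) ∨
    (∃ v u, G.Adj v u ∧ a = Sum.inr (v, u) ∧ b = Sum.inr (u, v))

lemma ds_adj_left {V : Type*} {G : SimpleGraph V} {v u : V} (h : G.Adj v u) :
    (doubleSubdivision G).Adj (Sum.inl v) (Sum.inr (v, u)) := by
  rw [doubleSubdivision, SimpleGraph.fromRel_adj]
  exact ⟨by simp, Or.inl (Or.inl ⟨v, u, h, rfl, rfl⟩)⟩

lemma ds_adj_mid {V : Type*} {G : SimpleGraph V} {v u : V} (h : G.Adj v u) :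
    (doubleSubdivision G).Adj (Sum.inr (v, u)) (Sum.inr (u, v)) := by
  rw [doubleSubdivision, SimpleGraph.fromRel_adj]
  refine ⟨?_, Or.inl (Or.inr ⟨v, u, h, rfl, rfl⟩)⟩
  simp only [ne_eq, Sum.inr.injEq, Prod.mk.injEq, not_and]
  intro hv hu
  exact h.ne hv

lemma ds_adj_cases {V : Type*} {G : SimpleGraph V} {a b : V ⊕ V × V}
    (h : (doubleSubdivision G).Adj a b) :
    ∃ v u, G.Adj v u ∧
      ((a = Sum.inl v ∧ b = Sum.inr (v, u)) ∨ (a = Sum.inr (v, u) ∧ b = Sum.inl v) ∨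
        (a = Sum.inr (v, u) ∧ b = Sum.inr (u, v))) := by
  rw [doubleSubdivision, SimpleGraph.fromRel_adj] at h
  obtain ⟨-, h | h⟩ := h
  · rcases h with ⟨v, u, ha, rfl, rfl⟩ | ⟨v, u, ha, rfl, rfl⟩
    · exact ⟨v, u, ha, Or.inl ⟨rfl, rfl⟩⟩
    · exact ⟨v, u, ha, Or.inr (Or.inr ⟨rfl, rfl⟩)⟩
  · rcases h with ⟨v, u, ha, rfl, rfl⟩ | ⟨v, u, ha, rfl, rfl⟩
    · exact ⟨v, u, ha, Or.inr (Or.inl ⟨rfl, rfl⟩)⟩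
    · exact ⟨u, v, ha.symm, Or.inr (Or.inr ⟨rfl, rfl⟩)⟩

/-- Let `G` be a finite simple graph, `Ĝ` its double subdivision and
`k ∈ ℕ`. Then `G` has a vertex cover of size at most `k` if and only if `Ĝ` has a
vertex cover of size at most `k + |E(G)|`. -/
theorem stmt_4 {V : Type*} [Fintype V] [DecidableEq V] (G : SimpleGraph V)
    [DecidableRel G.Adj] (k : ℕ) :
    (∃ S : Finset V, S.card ≤ k ∧ ∀ ⦃a b : V⦄, G.Adj a b → a ∈ S ∨ b ∈ S) ↔
    (∃ S : Finset (V ⊕ V × V), S.card ≤ k + G.edgeFinset.card ∧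
      ∀ ⦃a b : V ⊕ V × V⦄, (doubleSubdivision G).Adj a b → a ∈ S ∨ b ∈ S) := by
  classical
  constructor
  · rintro ⟨S, hScard, hScov⟩
    have hex : ∀ e ∈ G.edgeFinset, ∃ p : V × V, G.Adj p.1 p.2 ∧ e = Sym2.mk p.1 p.2 ∧ p.2 ∈ S := by
      intro e he
      rw [SimpleGraph.mem_edgeFinset] at he
      induction e using Sym2.inductionOn with
      | hf v u =>
        rw [SimpleGraph.mem_edgeSet] at he
        rcases hScov he with hv | hu
        · exact ⟨(u, v), he.symm, Sym2.eq_swap, hv⟩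
        · exact ⟨(v, u), he, rfl, hu⟩
    set f : {e // e ∈ G.edgeFinset} → V ⊕ V × V :=
      fun e => Sum.inr (Classical.choose (hex e.1 e.2)) with hf
    refine ⟨S.image Sum.inl ∪ G.edgeFinset.attach.image f, ?_, ?_⟩
    · calc (S.image Sum.inl ∪ G.edgeFinset.attach.image f).card
          ≤ (S.image Sum.inl).card + (G.edgeFinset.attach.image f).card :=
            Finset.card_union_le _ _
        _ ≤ S.card + G.edgeFinset.card := by
            gcongr
            · exact Finset.card_image_le
            · exact Finset.card_image_le.trans_eq Finset.card_attach
        _ ≤ k + G.edgeFinset.card := by gcongr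
    · intro a b hab
      obtain ⟨v, u, hvu, hcase⟩ := ds_adj_cases hab
      have he : s(v, u) ∈ G.edgeFinset := by
        rw [SimpleGraph.mem_edgeFinset]; exact hvu
      have hfmem : f ⟨s(v, u), he⟩ ∈ S.image Sum.inl ∪ G.edgeFinset.attach.image f :=
        Finset.mem_union_right _ (Finset.mem_image.mpr ⟨⟨s(v, u), he⟩, Finset.mem_attach _ _, rfl⟩)
      obtain ⟨hadj, heq, hmemS⟩ := Classical.choose_spec (hex s(v, u) he)
      set p := Classical.choose (hex s(v, u) he) with hp
      have hpcases : p = (v, u) ∨ p = (u, v) := by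
        have : s(v, u) = s(p.1, p.2) := by rw [heq]
        rw [Sym2.eq_iff] at this
        rcases this with ⟨h1, h2⟩ | ⟨h1, h2⟩
        · left; exact Prod.ext h1.symm h2.symm
        · right; exact Prod.ext h2.symm h1.symm
      rcases hcase with ⟨rfl, rfl⟩ | ⟨rfl, rfl⟩ | ⟨rfl, rfl⟩
      · -- a = inl v, b = inr (v, u)
        by_cases hv : v ∈ S
        · exact Or.inl (Finset.mem_union_left _ (Finset.mem_image_of_mem _ hv))
        · have hpe : p = (v, u) := by
            rcases hpcases with h | h
            · exact h
            · rw [h] at hmemS; exact absurd hmemS hv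
          right
          have hfval : f ⟨s(v, u), he⟩ = Sum.inr p := rfl
          rw [hfval, hpe] at hfmem
          exact hfmem
      · -- a = inr (v, u), b = inl v
        by_cases hv : v ∈ S
        · exact Or.inr (Finset.mem_union_left _ (Finset.mem_image_of_mem _ hv))
        · have hpe : p = (v, u) := by
            rcases hpcases with h | h
            · exact h
            · rw [h] at hmemS; exact absurd hmemS hv
          left
          have hfval : f ⟨s(v, u), he⟩ = Sum.inr p := rfl
          rw [hfval, hpe] at hfmem
          exact hfmem
      · -- a = inr (v, u), b = inr (u, v)
        have hfval : f ⟨s(v, u), he⟩ = Sum.inr p := rfl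
        rcases hpcases with h | h
        · left; rw [hfval, h] at hfmem; exact hfmem
        · right; rw [hfval, h] at hfmem; exact hfmem
  · rintro ⟨T, hTcard, hTcov⟩
    set S₀ : Finset V := Finset.univ.filter fun v => Sum.inl v ∈ T with hS₀
    set Bad : Finset (Sym2 V) := G.edgeFinset.filter (fun e => ∀ v ∈ e, Sum.inl v ∉ T) with hBad
    set W : Sym2 V → Finset (V ⊕ V × V) :=
      fun e => T.filter fun a => ∃ p : V × V, a = Sum.inr p ∧ e = Sym2.mk p.1 p.2 with hW
    -- pairwise disjointness of W
    have hWdisj : ∀ e ∈ G.edgeFinset, ∀ e' ∈ G.edgeFinset, e ≠ e' → Disjoint (W e) (W e') := by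
      intro e _ e' _ hne
      rw [Finset.disjoint_left]
      intro a ha ha'
      rw [hW] at ha ha'
      obtain ⟨-, p, rfl, hep⟩ := Finset.mem_filter.mp ha
      obtain ⟨-, p', hpp', hep'⟩ := Finset.mem_filter.mp ha'
      obtain rfl : p = p' := Sum.inr.inj hpp'
      exact hne (hep.trans hep'.symm)
    -- the union injects into T
    have hsub : S₀.image Sum.inl ∪ G.edgeFinset.biUnion W ⊆ T := by
      intro a ha
      rcases Finset.mem_union.mp ha with h | h
      · obtain ⟨v, hv, rfl⟩ := Finset.mem_image.mp h
        exact (Finset.mem_filter.mp hv).2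
      · obtain ⟨e, -, hae⟩ := Finset.mem_biUnion.mp h
        exact (Finset.mem_filter.mp hae).1
    have hdisj0 : Disjoint (S₀.image Sum.inl) (G.edgeFinset.biUnion W) := by
      rw [Finset.disjoint_left]
      intro a ha hb
      obtain ⟨v, -, rfl⟩ := Finset.mem_image.mp ha
      obtain ⟨e, -, hae⟩ := Finset.mem_biUnion.mp hb
      obtain ⟨-, p, hp, -⟩ := Finset.mem_filter.mp hae
      exact Sum.inl_ne_inr hp
    have hcount : S₀.card + ∑ e ∈ G.edgeFinset, (W e).card ≤ T.card := by
      calc S₀.card + ∑ e ∈ G.edgeFinset, (W e).card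
          = (S₀.image Sum.inl).card + (G.edgeFinset.biUnion W).card := by
            rw [Finset.card_image_of_injective _ Sum.inl_injective,
              Finset.card_biUnion hWdisj]
        _ = (S₀.image Sum.inl ∪ G.edgeFinset.biUnion W).card :=
            (Finset.card_union_of_disjoint hdisj0).symm
        _ ≤ T.card := Finset.card_le_card hsub
    -- lower bounds on card (W e)
    have hW1 : ∀ e ∈ G.edgeFinset, 1 ≤ (W e).card := by
      intro e he
      rw [SimpleGraph.mem_edgeFinset] at he
      induction e using Sym2.inductionOn with
      | hf v u =>
        rw [SimpleGraph.mem_edgeSet] at he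
        rcases hTcov (ds_adj_mid he) with h | h
        · exact Finset.card_pos.mpr ⟨Sum.inr (v, u), Finset.mem_filter.mpr ⟨h, (v, u), rfl, rfl⟩⟩
        · exact Finset.card_pos.mpr ⟨Sum.inr (u, v), Finset.mem_filter.mpr ⟨h, (u, v), rfl, Sym2.eq_swap⟩⟩
    have hW2 : ∀ e ∈ Bad, 2 ≤ (W e).card := by
      intro e he
      rw [hBad, Finset.mem_filter] at he
      obtain ⟨he, hbad⟩ := he
      rw [SimpleGraph.mem_edgeFinset] at he
      induction e using Sym2.inductionOn with
      | hf v u =>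
        rw [SimpleGraph.mem_edgeSet] at he
        have hv : Sum.inl v ∉ T := hbad v (Sym2.mem_mk_left _ _)
        have hu : Sum.inl u ∉ T := hbad u (Sym2.mem_mk_right _ _)
        have h1 : Sum.inr (v, u) ∈ T := by
          rcases hTcov (ds_adj_left he) with h | h
          · exact absurd h hv
          · exact h
        have h2 : Sum.inr (u, v) ∈ T := by
          rcases hTcov (ds_adj_left he.symm) with h | h
          · exact absurd h hu
          · exact h
        have hpair : ({Sum.inr (v, u), Sum.inr (u, v)} : Finset (V ⊕ V × V)) ⊆ W s(v, u) := by
          intro a ha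
          rcases Finset.mem_insert.mp ha with rfl | ha
          · exact Finset.mem_filter.mpr ⟨h1, (v, u), rfl, rfl⟩
          · rw [Finset.mem_singleton] at ha
            subst ha
            exact Finset.mem_filter.mpr ⟨h2, (u, v), rfl, Sym2.eq_swap⟩
        calc (2 : ℕ) = ({Sum.inr (v, u), Sum.inr (u, v)} : Finset (V ⊕ V × V)).card := by
              rw [Finset.card_insert_of_notMem, Finset.card_singleton]
              simp only [Finset.mem_singleton, Sum.inr.injEq, Prod.mk.injEq, not_and]
              intro hvu
              exact absurd hvu he.ne
          _ ≤ (W s(v, u)).card := Finset.card_le_card hpair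
    have hsumlb : G.edgeFinset.card + Bad.card ≤ ∑ e ∈ G.edgeFinset, (W e).card := by
      have : ∑ e ∈ G.edgeFinset, ((1 : ℕ) + if e ∈ Bad then 1 else 0)
          ≤ ∑ e ∈ G.edgeFinset, (W e).card := by
        apply Finset.sum_le_sum
        intro e he
        by_cases hb : e ∈ Bad
        · simpa [hb] using hW2 e hb
        · simpa [hb] using hW1 e he
      calc G.edgeFinset.card + Bad.card
          = ∑ e ∈ G.edgeFinset, (1 : ℕ) + ∑ e ∈ G.edgeFinset, (if e ∈ Bad then 1 else 0) := by
            rw [Finset.sum_const, smul_eq_mul, mul_one, Finset.sum_ite_mem,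
              Finset.inter_eq_right.mpr (Finset.filter_subset _ _), Finset.sum_const,
              smul_eq_mul, mul_one]
        _ = ∑ e ∈ G.edgeFinset, ((1 : ℕ) + if e ∈ Bad then 1 else 0) := by
            rw [← Finset.sum_add_distrib]
        _ ≤ ∑ e ∈ G.edgeFinset, (W e).card := this
    have hkey : S₀.card + Bad.card ≤ k := by
      have h1 : S₀.card + (G.edgeFinset.card + Bad.card) ≤ T.card :=
        le_trans (by gcongr) hcount
      omega
    refine ⟨S₀ ∪ Bad.image (fun e => (Quot.out e).1), ?_, ?_⟩
    · calc (S₀ ∪ Bad.image (fun e => (Quot.out e).1)).card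
          ≤ S₀.card + (Bad.image (fun e => (Quot.out e).1)).card := Finset.card_union_le _ _
        _ ≤ S₀.card + Bad.card := by gcongr; exact Finset.card_image_le
        _ ≤ k := hkey
    · intro a b hab
      by_cases hva : Sum.inl a ∈ T
      · exact Or.inl (Finset.mem_union_left _ (Finset.mem_filter.mpr ⟨Finset.mem_univ _, hva⟩))
      by_cases hvb : Sum.inl b ∈ T
      · exact Or.inr (Finset.mem_union_left _ (Finset.mem_filter.mpr ⟨Finset.mem_univ _, hvb⟩))
      have hbadmem : s(a, b) ∈ Bad := by
        rw [hBad, Finset.mem_filter]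
        refine ⟨SimpleGraph.mem_edgeFinset.mpr hab, ?_⟩
        intro v hv
        rcases Sym2.mem_iff.mp hv with rfl | rfl
        · exact hva
        · exact hvb
      have hout : (Quot.out s(a, b)).1 ∈ s(a, b) := Sym2.out_fst_mem _
      have hmem : (Quot.out s(a, b)).1 ∈ Bad.image (fun e => (Quot.out e).1) :=
        Finset.mem_image_of_mem _ hbadmem
      rcases Sym2.mem_iff.mp hout with h | h
      · exact Or.inl (Finset.mem_union_right _ (h ▸ hmem))
      · exact Or.inr (Finset.mem_union_right _ (h ▸ hmem))
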